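/- Let Π = Cᵀ W^{-1} C where C ∈ ℝ^{n×N} has rank n and W = C Cᵀ, and let Γ be an N×N nonnegative diagonal matrix. If ‖Π - Π Γ Π‖₂ ≤ ε, then for every x ∈ ℝⁿ, |xᵀ(W - C Γ Cᵀ)x| ≤ ε xᵀ W x. -/

import Mathlib

open Matrix

/-- Operator-norm bound on the projection `Π = Cᵀ W⁻¹ C` translates into a relative
quadratic-form bound on the Gramians: `‖Π - ΠΓΠ‖₂ ≤ ε` implies
`|xᵀ(W - CΓCᵀ)x| ≤ ε xᵀWx` for all `x`. -/
theorem stmt15 (n N : ℕ) (C : Matrix (Fin n) (Fin N) ℝ) (hrank : C.rank = n)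
    (W : Matrix (Fin n) (Fin n) ℝ) (hW : W = C * Cᵀ)
    (P : Matrix (Fin N) (Fin N) ℝ) (hP : P = Cᵀ * W⁻¹ * C)
    (g : Fin N → ℝ) (hg : ∀ i, 0 ≤ g i) (Γ : Matrix (Fin N) (Fin N) ℝ)
    (hΓ : Γ = Matrix.diagonal g)
    (ε : ℝ)
    (hnorm : ‖(Matrix.toEuclideanCLM (𝕜 := ℝ) (P - P * Γ * P))‖ ≤ ε) :
    ∀ x : Fin n → ℝ, |x ⬝ᵥ ((W - C * Γ * Cᵀ).mulVec x)| ≤ ε * (x ⬝ᵥ W.mulVec x) := by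
  intro x
  -- W is invertible
  have hWrank : W.rank = n := by
    rw [hW]
    simpa using C.rank_self_mul_transpose.trans hrank
  have hWunit : IsUnit W := by
    rw [← mulVec_surjective_iff_isUnit]
    have : LinearMap.range W.mulVecLin = ⊤ :=
      Submodule.eq_top_of_finrank_eq (by simpa [Matrix.rank] using hWrank)
    exact fun y => (LinearMap.range_eq_top.mp this) y
  have hWinv : W⁻¹ * W = 1 := nonsing_inv_mul W ((isUnit_iff_isUnit_det W).mp hWunit)
  have hWsymm : Wᵀ = W := by rw [hW, transpose_mul, transpose_transpose]
  -- P is symmetric and P * Cᵀ = Cᵀ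
  have hPsymm : Pᵀ = P := by
    rw [hP, transpose_mul, transpose_mul, transpose_transpose, transpose_nonsing_inv, hWsymm,
      Matrix.mul_assoc]
  have hPC : P * Cᵀ = Cᵀ := by
    rw [hP, Matrix.mul_assoc, Matrix.mul_assoc, ← hW, hWinv, Matrix.mul_one]
  set y : Fin N → ℝ := Cᵀ.mulVec x with hy
  have hPy : P.mulVec y = y := by rw [hy, mulVec_mulVec, hPC]
  have h1 : x ⬝ᵥ (W *ᵥ x) = y ⬝ᵥ y := by
    rw [hW, ← mulVec_mulVec, dotProduct_mulVec, ← mulVec_transpose, ← hy]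
  have h2 : x ⬝ᵥ ((C * Γ * Cᵀ) *ᵥ x) = y ⬝ᵥ (Γ *ᵥ y) := by
    rw [Matrix.mul_assoc, ← mulVec_mulVec, dotProduct_mulVec, ← mulVec_transpose, ← hy,
      ← mulVec_mulVec, ← hy]
  have h3 : y ⬝ᵥ (P *ᵥ y) = y ⬝ᵥ y := by rw [hPy]
  have h4 : y ⬝ᵥ ((P * Γ * P) *ᵥ y) = y ⬝ᵥ (Γ *ᵥ y) := by
    rw [← mulVec_mulVec, hPy, ← mulVec_mulVec, dotProduct_mulVec, ← mulVec_transpose, hPsymm, hPy]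
  have hq : x ⬝ᵥ ((W - C * Γ * Cᵀ) *ᵥ x) = y ⬝ᵥ ((P - P * Γ * P) *ᵥ y) := by
    rw [sub_mulVec, sub_mulVec, dotProduct_sub, dotProduct_sub, h1, h2, h3, h4]
  rw [hq, h1]
  set M := P - P * Γ * P with hM
  set T := Matrix.toEuclideanCLM (𝕜 := ℝ) M with hT
  set y' : EuclideanSpace ℝ (Fin N) := (WithLp.equiv 2 _).symm y with hy'
  have key : y ⬝ᵥ (M *ᵥ y) = inner (𝕜 := ℝ) y' (T y') := by
    rw [hy', hT, WithLp.equiv_symm_apply, toEuclideanCLM_toLp]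
    simp [PiLp.inner_apply, dotProduct, Matrix.toLin'_apply, mul_comm]
  have hyy : (y ⬝ᵥ y : ℝ) = ‖y'‖ * ‖y'‖ := by
    rw [← real_inner_self_eq_norm_mul_norm]
    simp [hy', PiLp.inner_apply, dotProduct, EuclideanSpace.real_norm_sq_eq, ← sq]
  rw [key, hyy]
  calc |(inner (𝕜 := ℝ) y' (T y') : ℝ)| ≤ ‖y'‖ * ‖T y'‖ := by
        exact abs_real_inner_le_norm y' (T y')
    _ ≤ ‖y'‖ * (‖T‖ * ‖y'‖) :=
        mul_le_mul_of_nonneg_left (T.le_opNorm y') (norm_nonneg _)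
    _ ≤ ‖y'‖ * (ε * ‖y'‖) :=
        mul_le_mul_of_nonneg_left (mul_le_mul_of_nonneg_right hnorm (norm_nonneg _)) (norm_nonneg _)
    _ = ε * (‖y'‖ * ‖y'‖) := by ring
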